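/- For every odd prime p, κ_p equals the least positive integer n such that γ_p(n mod p) ≠ 0 in 𝔽_p. -/

import Mathlib

def fermatQuotient (p : ℕ) (k : ℤ) : ℕ :=
  (((k ^ (p - 1) - 1) / p) % p).toNat

noncomputable def kappa (p : ℕ) : ℕ :=
  sInf {n : ℕ | 0 < n ∧ ¬ p ∣ n ∧ fermatQuotient p n ≠ 0}

def mirimanoff (p : ℕ) (t : ZMod p) : ZMod p :=
  ∑ j ∈ Finset.Icc 1 (p - 1), (j : ZMod p)⁻¹ * t ^ j

namespace KappaAux

def W (p : ℕ) (n : ℤ) : ℤ := (n ^ p - n) / p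

lemma dvd_pow_sub (p : ℕ) (hp : p.Prime) (n : ℤ) : (p : ℤ) ∣ n ^ p - n := by
  haveI : Fact p.Prime := ⟨hp⟩
  rw [← ZMod.intCast_zmod_eq_zero_iff_dvd]
  push_cast
  rw [ZMod.pow_card, sub_self]

lemma mul_W (p : ℕ) (hp : p.Prime) (n : ℤ) : (p : ℤ) * W p n = n ^ p - n :=
  Int.mul_ediv_cancel' (dvd_pow_sub p hp n)

lemma mirimanoff_zero (p : ℕ) : mirimanoff p 0 = 0 := by
  unfold mirimanoff
  apply Finset.sum_eq_zero
  intro j hj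
  rw [Finset.mem_Icc] at hj
  rw [zero_pow (by omega), mul_zero]

lemma natCast_ne_zero_of_lt (p k : ℕ) (hk : k ≠ 0) (hkp : k < p) : (k : ZMod p) ≠ 0 := by
  rw [Ne, ZMod.natCast_eq_zero_iff]
  intro h
  exact absurd (Nat.le_of_dvd (Nat.pos_of_ne_zero hk) h) (by omega)

lemma choose_sub_one (p : ℕ) (hp : p.Prime) :
    ∀ k, k ≤ p - 1 → (((p - 1).choose k : ℕ) : ZMod p) = (-1) ^ k := by
  haveI : Fact p.Prime := ⟨hp⟩
  intro k
  induction k with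
  | zero => intro _; simp
  | succ k ih =>
    intro hk
    have hk' : k ≤ p - 1 := by omega
    have h1 := Nat.choose_succ_right_eq (p - 1) k
    have hcast : (((p - 1).choose (k + 1) * (k + 1) : ℕ) : ZMod p)
        = (((p - 1).choose k * (p - 1 - k) : ℕ) : ZMod p) := by rw [h1]
    push_cast at hcast
    rw [ih hk'] at hcast
    have hp1k : ((p - 1 - k : ℕ) : ZMod p) = -((k : ZMod p) + 1) := by
      have he : p - 1 - k = p - (k + 1) := by omega
      rw [he, Nat.cast_sub (by omega), ZMod.natCast_self, zero_sub]
      push_cast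
      ring
    rw [hp1k] at hcast
    have hne : ((k : ZMod p) + 1) ≠ 0 := by
      have := natCast_ne_zero_of_lt p (k + 1) (by omega) (by omega)
      push_cast at this
      exact this
    have : (((p - 1).choose (k + 1) : ℕ) : ZMod p) * ((k : ZMod p) + 1)
        = (-1) ^ (k + 1) * ((k : ZMod p) + 1) := by
      rw [hcast]; ring
    exact mul_right_cancel₀ hne this

lemma choose_div_p (p : ℕ) (hp : p.Prime) (k : ℕ) (hk1 : 1 ≤ k) (hk2 : k ≤ p - 1) :
    (p.choose k / p) * k = (p - 1).choose (k - 1) := by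
  have hp1 : 1 ≤ p := hp.one_lt.le
  have hdvd : p ∣ p.choose k := hp.dvd_choose_self (by omega) (by omega)
  have h1 := Nat.add_one_mul_choose_eq (p - 1) (k - 1)
  have hpe : p - 1 + 1 = p := by omega
  have hke : k - 1 + 1 = k := by omega
  rw [hpe, hke] at h1
  have h2 : p.choose k = p * (p.choose k / p) := (Nat.mul_div_cancel' hdvd).symm
  rw [h2, mul_assoc] at h1
  exact (Nat.eq_of_mul_eq_mul_left (by omega) h1).symm

lemma choose_div_p_cast (p : ℕ) (hp : p.Prime) (k : ℕ) (hk1 : 1 ≤ k) (hk2 : k ≤ p - 1) :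
    ((p.choose k / p : ℕ) : ZMod p) = (-1) ^ (k - 1) * ((k : ZMod p))⁻¹ := by
  haveI : Fact p.Prime := ⟨hp⟩
  have h := choose_div_p p hp k hk1 hk2
  have hcast : ((p.choose k / p : ℕ) : ZMod p) * (k : ZMod p) = (-1) ^ (k - 1) := by
    rw [← Nat.cast_mul, h, choose_sub_one p hp (k - 1) (by omega)]
  have hne : (k : ZMod p) ≠ 0 := natCast_ne_zero_of_lt p k (by omega) (by omega)
  field_simp at hcast ⊢
  rw [hcast]

lemma mirimanoff_range (p : ℕ) (hp : p.Prime) (t : ZMod p) :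
    mirimanoff p t = ∑ m ∈ Finset.range (p - 1), (((1 + m : ℕ) : ZMod p))⁻¹ * t ^ (1 + m) := by
  have h1 : Finset.Icc 1 (p - 1) = Finset.Ico 1 p := by
    rw [← Finset.Ico_add_one_right_eq_Icc]
    have := hp.one_lt
    congr 1
    omega
  rw [mirimanoff, h1, Finset.sum_Ico_eq_sum_range]

lemma W_step (p : ℕ) (hp : p.Prime) (hodd : Odd p) (n : ℤ) :
    ((W p n - W p (n - 1) : ℤ) : ZMod p) = - mirimanoff p (n : ZMod p) := by
  haveI : Fact p.Prime := ⟨hp⟩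
  have hp1 : 1 ≤ p := hp.one_lt.le
  set q := p - 1 with hq
  have hpq : p = q + 1 := by omega
  set f : ℕ → ℤ := fun m => (-1) ^ (m + p) * n ^ m * 1 ^ (p - m) * (p.choose m) with hf
  have hbin : (n - 1) ^ p = ∑ m ∈ Finset.range (p + 1), f m := sub_pow n 1 p
  have h0 : ∑ m ∈ Finset.range (p + 1), f m = (∑ m ∈ Finset.range p, f m) + f p :=
    Finset.sum_range_succ f p
  have h1 : ∑ m ∈ Finset.range p, f m = (∑ m ∈ Finset.range q, f (m + 1)) + f 0 := by
    rw [hpq]; exact Finset.sum_range_succ' f q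
  have hfp : f p = n ^ p := by
    simp only [hf]
    rw [show (-1 : ℤ) ^ (p + p) = 1 from Even.neg_one_pow ⟨p, rfl⟩]
    simp
  have hf0 : f 0 = -1 := by
    simp only [hf]
    have hop : (-1 : ℤ) ^ (0 + p) = -1 := by
      rw [zero_add]; exact Odd.neg_one_pow hodd
    rw [hop]
    simp
  have key : (p : ℤ) * (W p n - W p (n - 1)) =
      ∑ m ∈ Finset.range q, (-1) ^ (m + 1) * (p.choose (m + 1) : ℤ) * n ^ (m + 1) := by
    rw [mul_sub, mul_W p hp, mul_W p hp, hbin, h0, h1, hfp, hf0]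
    have hterm : ∀ m ∈ Finset.range q,
        -f (m + 1) = (-1) ^ (m + 1) * (p.choose (m + 1) : ℤ) * n ^ (m + 1) := by
      intro m hm
      simp only [hf, one_pow]
      have hop : (-1 : ℤ) ^ p = -1 := Odd.neg_one_pow hodd
      have : (-1 : ℤ) ^ (m + 1 + p) = -(-1) ^ (m + 1) := by
        rw [pow_add, hop]
        ring
      rw [this]
      ring
    rw [← Finset.sum_congr rfl hterm, Finset.sum_neg_distrib]
    ring
  have key2 : (p : ℤ) * (W p n - W p (n - 1)) =
      (p : ℤ) * ∑ m ∈ Finset.range q, (-1) ^ (m + 1) * ((p.choose (m + 1) / p : ℕ) : ℤ) * n ^ (m + 1) := by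
    rw [key, Finset.mul_sum]
    apply Finset.sum_congr rfl
    intro m hm
    rw [Finset.mem_range] at hm
    have hdvd : p ∣ p.choose (m + 1) := hp.dvd_choose_self (by omega) (by omega)
    have : (p.choose (m + 1) : ℤ) = (p : ℤ) * ((p.choose (m + 1) / p : ℕ) : ℤ) := by
      exact_mod_cast (Nat.mul_div_cancel' hdvd).symm
    rw [this]
    ring
  have key3 : W p n - W p (n - 1) =
      ∑ m ∈ Finset.range q, (-1) ^ (m + 1) * ((p.choose (m + 1) / p : ℕ) : ℤ) * n ^ (m + 1) :=
    mul_left_cancel₀ (by exact_mod_cast hp.pos.ne') key2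
  rw [key3, Int.cast_sum, mirimanoff_range p hp, ← Finset.sum_neg_distrib]
  apply Finset.sum_congr rfl
  intro m hm
  rw [Finset.mem_range] at hm
  have hc := choose_div_p_cast p hp (m + 1) (by omega) (by omega)
  simp only [Int.cast_mul, Int.cast_pow, Int.cast_neg, Int.cast_one, Int.cast_natCast]
  rw [hc, show m + 1 - 1 = m from rfl, show (1 + m) = (m + 1) from by omega]
  have hsign : ((-1 : ZMod p)) ^ (m + 1) * (-1) ^ m = -1 := by
    rw [← pow_add, show m + 1 + m = 2 * m + 1 by omega, pow_succ, pow_mul]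
    norm_num
  linear_combination ((((m + 1 : ℕ) : ZMod p))⁻¹ * ((n : ZMod p)) ^ (m + 1)) * hsign

lemma W_cast (p : ℕ) (hp : p.Prime) (hodd : Odd p) (n : ℕ) :
    ((W p (n : ℤ) : ℤ) : ZMod p) = - ∑ m ∈ Finset.Icc 1 n, mirimanoff p (m : ZMod p) := by
  induction n with
  | zero =>
    have : W p 0 = 0 := by
      simp [W, zero_pow hp.pos.ne']
    simp [this]
  | succ n ih =>
    have hstep := W_step p hp hodd ((n : ℤ) + 1)
    have he : ((n : ℤ) + 1) - 1 = (n : ℤ) := by ring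
    rw [he] at hstep
    have hsum := Finset.sum_Icc_succ_top (by omega : 1 ≤ n + 1)
      (fun m : ℕ => mirimanoff p (m : ZMod p))
    rw [show (((n + 1 : ℕ) : ℤ)) = ((n : ℤ) + 1) by push_cast; ring]
    rw [show W p ((n : ℤ) + 1) = (W p ((n : ℤ) + 1) - W p (n : ℤ)) + W p (n : ℤ) by ring]
    rw [Int.cast_add, hstep, ih, hsum]
    push_cast
    ring

lemma fq_ne_zero_iff (p : ℕ) (hp : p.Prime) (n : ℕ) (hn : ¬ p ∣ n) :
    fermatQuotient p (n : ℤ) ≠ 0 ↔ ((W p (n : ℤ) : ℤ) : ZMod p) ≠ 0 := by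
  haveI : Fact p.Prime := ⟨hp⟩
  have hp1 := hp.one_lt
  set A : ℤ := (((n : ℤ)) ^ (p - 1) - 1) / p with hA
  have hnz : ((n : ℕ) : ZMod p) ≠ 0 := by
    rw [Ne, ZMod.natCast_eq_zero_iff]
    exact hn
  have hFermat : (p : ℤ) ∣ ((n : ℤ) ^ (p - 1) - 1) := by
    rw [← ZMod.intCast_zmod_eq_zero_iff_dvd]
    push_cast
    rw [ZMod.pow_card_sub_one_eq_one hnz, sub_self]
  have hmulA : (p : ℤ) * A = (n : ℤ) ^ (p - 1) - 1 := Int.mul_ediv_cancel' hFermat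
  have hWA : W p (n : ℤ) = (n : ℤ) * A := by
    have hcancel : (p : ℤ) * W p (n : ℤ) = (p : ℤ) * ((n : ℤ) * A) := by
      rw [mul_W p hp]
      have hpow : ((n : ℤ)) ^ p = (n : ℤ) ^ (p - 1) * (n : ℤ) := by
        rw [← pow_succ]
        congr 1
        omega
      rw [hpow]
      have : (n : ℤ) * ((p : ℤ) * A) = (n : ℤ) * ((n : ℤ) ^ (p - 1) - 1) := by rw [hmulA]
      linarith [this]
    exact mul_left_cancel₀ (by exact_mod_cast hp.pos.ne') hcancel
  have hfq : fermatQuotient p (n : ℤ) = (A % p).toNat := rfl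
  have hAmod : A % (p : ℤ) = 0 ↔ ((A : ℤ) : ZMod p) = 0 := by
    rw [ZMod.intCast_zmod_eq_zero_iff_dvd]
    exact ⟨fun h => Int.dvd_of_emod_eq_zero h, fun h => Int.emod_eq_zero_of_dvd h⟩
  constructor
  · intro hfqne
    rw [hWA]
    push_cast
    intro hcontra
    apply hfqne
    rw [hfq, Int.toNat_eq_zero]
    have : ((A : ℤ) : ZMod p) = 0 := by
      rcases mul_eq_zero.mp hcontra with h | h
      · exact absurd h hnz
      · exact h
    have h0 : A % (p : ℤ) = 0 := hAmod.mpr this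
    omega
  · intro hWne hfq0
    apply hWne
    rw [hfq, Int.toNat_eq_zero] at hfq0
    have hge : 0 ≤ A % (p : ℤ) := Int.emod_nonneg A (by exact_mod_cast hp.pos.ne')
    have h0 : A % (p : ℤ) = 0 := le_antisymm hfq0 hge
    have hAz : ((A : ℤ) : ZMod p) = 0 := hAmod.mp h0
    rw [hWA]
    push_cast
    rw [hAz, mul_zero]

lemma exists_mirimanoff_ne_zero (p : ℕ) (hp : p.Prime) :
    ∃ t : ZMod p, mirimanoff p t ≠ 0 := by
  haveI : Fact p.Prime := ⟨hp⟩
  have hp1 := hp.one_lt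
  by_contra h
  push_neg at h
  set P : Polynomial (ZMod p) :=
    ∑ j ∈ Finset.Icc 1 (p - 1), Polynomial.C ((j : ZMod p))⁻¹ * Polynomial.X ^ j with hP
  have heval : ∀ t : ZMod p, P.eval t = mirimanoff p t := by
    intro t
    rw [hP, Polynomial.eval_finset_sum, mirimanoff]
    apply Finset.sum_congr rfl
    intro j hj
    simp
  have hdeg : P.natDegree < Fintype.card (ZMod p) := by
    rw [ZMod.card]
    have : P.natDegree ≤ p - 1 := by
      apply Polynomial.natDegree_sum_le_of_forall_le
      intro j hj
      rw [Finset.mem_Icc] at hj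
      calc (Polynomial.C ((j : ZMod p))⁻¹ * Polynomial.X ^ j).natDegree
          ≤ (Polynomial.X ^ j : Polynomial (ZMod p)).natDegree := Polynomial.natDegree_C_mul_le _ _
        _ ≤ j := Polynomial.natDegree_X_pow_le j
        _ ≤ p - 1 := hj.2
    omega
  have hPz : P = 0 :=
    Polynomial.eq_zero_of_natDegree_lt_card_of_eval_eq_zero P Function.injective_id
      (fun t => by rw [heval]; exact h t) hdeg
  have hco : P.coeff 1 = 1 := by
    rw [hP, Polynomial.finset_sum_coeff]
    rw [Finset.sum_eq_single 1]
    · simp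
    · intro j hj hjne
      rw [Polynomial.coeff_C_mul, Polynomial.coeff_X_pow, if_neg (Ne.symm hjne), mul_zero]
    · intro hnot
      exfalso
      apply hnot
      rw [Finset.mem_Icc]
      omega
  rw [hPz] at hco
  simp at hco

end KappaAux

open KappaAux in
theorem kappa_eq_least_nonzero_of_mirimanoff (p : ℕ) (hp : p.Prime) (hodd : Odd p) :
    kappa p = sInf {n : ℕ | 0 < n ∧ mirimanoff p (n : ZMod p) ≠ 0} := by
  haveI : Fact p.Prime := ⟨hp⟩
  set Sg : Set ℕ := {n : ℕ | 0 < n ∧ mirimanoff p (n : ZMod p) ≠ 0} with hSg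
  set Sk : Set ℕ := {n : ℕ | 0 < n ∧ ¬ p ∣ n ∧ fermatQuotient p n ≠ 0} with hSk
  -- Sg is nonempty
  obtain ⟨t, ht⟩ := exists_mirimanoff_ne_zero p hp
  have htne : t ≠ 0 := fun h => ht (h ▸ mirimanoff_zero p)
  have htval : ((t.val : ℕ) : ZMod p) = t := by
    simp [ZMod.natCast_val, ZMod.cast_id]
  have hgne : Sg.Nonempty := by
    refine ⟨t.val, ?_, ?_⟩
    · have : t.val ≠ 0 := fun h => htne (by rw [← htval, h, Nat.cast_zero])
      omega
    · rw [htval]; exact ht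
  set n₀ : ℕ := sInf Sg with hn₀def
  obtain ⟨hn₀pos, hn₀ne⟩ : 0 < n₀ ∧ mirimanoff p ((n₀ : ℕ) : ZMod p) ≠ 0 := Nat.sInf_mem hgne
  have hmin : ∀ m : ℕ, 0 < m → m < n₀ → mirimanoff p ((m : ℕ) : ZMod p) = 0 := by
    intro m hm hlt
    by_contra hne
    have hmem : m ∈ Sg := ⟨hm, hne⟩
    have := Nat.sInf_le hmem
    omega
  have hpn₀ : ¬ p ∣ n₀ := by
    intro hdvd
    apply hn₀ne
    have : ((n₀ : ℕ) : ZMod p) = 0 := (ZMod.natCast_eq_zero_iff _ _).mpr hdvd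
    rw [this]
    exact mirimanoff_zero p
  have hWn₀ : ((W p (n₀ : ℤ) : ℤ) : ZMod p) = - mirimanoff p ((n₀ : ℕ) : ZMod p) := by
    rw [W_cast p hp hodd]
    congr 1
    rw [Finset.sum_eq_single_of_mem n₀ (by rw [Finset.mem_Icc]; omega)]
    intro m hm hmne
    rw [Finset.mem_Icc] at hm
    exact hmin m (by omega) (by omega)
  have hWn₀ne : ((W p (n₀ : ℤ) : ℤ) : ZMod p) ≠ 0 := by
    rw [hWn₀]
    exact neg_ne_zero.mpr hn₀ne
  have hn₀k : n₀ ∈ Sk := ⟨hn₀pos, hpn₀, (fq_ne_zero_iff p hp n₀ hpn₀).mpr hWn₀ne⟩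
  have hkne : Sk.Nonempty := ⟨n₀, hn₀k⟩
  have hle : kappa p ≤ n₀ := Nat.sInf_le hn₀k
  have hge : n₀ ≤ kappa p := by
    obtain ⟨hkpos, hkdvd, hkfq⟩ : kappa p ∈ Sk := Nat.sInf_mem hkne
    have hWk : ((W p ((kappa p : ℕ) : ℤ) : ℤ) : ZMod p) ≠ 0 :=
      (fq_ne_zero_iff p hp (kappa p) hkdvd).mp hkfq
    rw [W_cast p hp hodd] at hWk
    have hsne : ∑ m ∈ Finset.Icc 1 (kappa p), mirimanoff p ((m : ℕ) : ZMod p) ≠ 0 := by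
      intro h
      rw [h] at hWk
      simp at hWk
    obtain ⟨m, hm, hmne⟩ : ∃ m ∈ Finset.Icc 1 (kappa p), mirimanoff p ((m : ℕ) : ZMod p) ≠ 0 := by
      by_contra hc
      push_neg at hc
      exact hsne (Finset.sum_eq_zero hc)
    rw [Finset.mem_Icc] at hm
    have hmem : m ∈ Sg := ⟨by omega, hmne⟩
    have := Nat.sInf_le hmem
    omega
  omega
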